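/- Let A = [[A_ff, A_fc],[A_cf, A_cc]], let Δ_F be an invertible F×F matrix, set Z = −A_cf·Δ_F, δ_F = I − Δ_F·A_ff, δ_P = A_ff·W + A_fc, Ŵ = δ_F·W − Δ_F·A_fc, let P = [[W],[I]] and R = [Z, I], K = R·A·P, and let K̂ be any invertible C×C matrix with δK = K̂ − K. Define the multilevel error-propagation matrix Ê = I − M̂⁻¹·A, where M̂⁻¹ denotes the product [[I, Ŵ],[0, I]]·[[Δ_F, 0],[0, K̂⁻¹]]·[[I, 0],[Z, I]]. Then for every integer k ≥ 1, Ê^k = U · Ĝ^(k−1) · V, where U = [[I − Ŵ·K̂⁻¹·A_cf, Ŵ·K̂⁻¹],[−K̂⁻¹·A_cf, K̂⁻¹]], V = [[δ_F, −δ_F·W],[0, δK]], and Ĝ = [[δ_F + δ_F·Δ_F·δ_P·K̂⁻¹·A_cf, −δ_F·Δ_F·δ_P·K̂⁻¹],[−δK·K̂⁻¹·A_cf, δK·K̂⁻¹]]. -/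

import Mathlib

open Matrix

/-- **Multilevel outer-product form.** With inexact coarse solve `K̂⁻¹` and `Z = −A_cf·Δ_F`,
the multilevel error propagator `Ê = I − M̂⁻¹·A` satisfies `Ê^k = U·Ĝ^(k−1)·V` for all
`k ≥ 1`, with `U`, `V`, and `Ĝ` the stated 2×2 block matrices. -/
theorem multilevel_error_prop_powers
    {F C : Type*} [Fintype F] [Fintype C] [DecidableEq F] [DecidableEq C]
    (Aff : Matrix F F ℝ) (Afc : Matrix F C ℝ) (Acf : Matrix C F ℝ) (Acc : Matrix C C ℝ)
    (W : Matrix F C ℝ) (ΔF : Matrix F F ℝ) (hΔF : IsUnit ΔF)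
    (Z : Matrix C F ℝ) (hZ : Z = -(Acf * ΔF))
    (δF : Matrix F F ℝ) (hδF : δF = 1 - ΔF * Aff)
    (δP : Matrix F C ℝ) (hδP : δP = Aff * W + Afc)
    (Weff : Matrix F C ℝ) (hWeff : Weff = δF * W - ΔF * Afc)
    (A : Matrix (F ⊕ C) (F ⊕ C) ℝ) (hA : A = fromBlocks Aff Afc Acf Acc)
    (P : Matrix (F ⊕ C) C ℝ) (hP : P = fromRows W 1)
    (R : Matrix C (F ⊕ C) ℝ) (hR : R = fromCols Z 1)
    (K : Matrix C C ℝ) (hK : K = R * A * P)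
    (Khat : Matrix C C ℝ) (hKhat : IsUnit Khat)
    (δK : Matrix C C ℝ) (hδK : δK = Khat - K)
    (Minvhat : Matrix (F ⊕ C) (F ⊕ C) ℝ)
    (hMinvhat :
      Minvhat = fromBlocks 1 Weff 0 1 * fromBlocks ΔF 0 0 Khat⁻¹ * fromBlocks 1 0 Z 1)
    (Ehat : Matrix (F ⊕ C) (F ⊕ C) ℝ) (hEhat : Ehat = 1 - Minvhat * A)
    (U : Matrix (F ⊕ C) (F ⊕ C) ℝ)
    (hU : U = fromBlocks (1 - Weff * Khat⁻¹ * Acf) (Weff * Khat⁻¹)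
      (-(Khat⁻¹ * Acf)) Khat⁻¹)
    (V : Matrix (F ⊕ C) (F ⊕ C) ℝ)
    (hV : V = fromBlocks δF (-(δF * W)) 0 δK)
    (Ghat : Matrix (F ⊕ C) (F ⊕ C) ℝ)
    (hGhat : Ghat = fromBlocks (δF + δF * ΔF * δP * Khat⁻¹ * Acf)
      (-(δF * ΔF * δP * Khat⁻¹)) (-(δK * Khat⁻¹ * Acf)) (δK * Khat⁻¹)) :
    ∀ k : ℕ, 1 ≤ k → Ehat ^ k = U * Ghat ^ (k - 1) * V := by

  have hdet : IsUnit Khat.det := (Matrix.isUnit_iff_isUnit_det Khat).mp hKhat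
  have hK1 : ∀ (X : Matrix C F ℝ), Khat⁻¹ * (Khat * X) = X := by
    intro X; rw [← Matrix.mul_assoc, Matrix.nonsing_inv_mul _ hdet, Matrix.one_mul]
  have hK1c : ∀ (X : Matrix C C ℝ), Khat⁻¹ * (Khat * X) = X := by
    intro X; rw [← Matrix.mul_assoc, Matrix.nonsing_inv_mul _ hdet, Matrix.one_mul]
  have hK2 : ∀ (X : Matrix C F ℝ), Khat * (Khat⁻¹ * X) = X := by
    intro X; rw [← Matrix.mul_assoc, Matrix.mul_nonsing_inv _ hdet, Matrix.one_mul]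
  have hK2c : ∀ (X : Matrix C C ℝ), Khat * (Khat⁻¹ * X) = X := by
    intro X; rw [← Matrix.mul_assoc, Matrix.mul_nonsing_inv _ hdet, Matrix.one_mul]
  have hK1' := Matrix.nonsing_inv_mul _ hdet
  have hK2' := Matrix.mul_nonsing_inv _ hdet
  have hone : (1 : Matrix (F ⊕ C) (F ⊕ C) ℝ) = fromBlocks 1 0 0 1 :=
    Matrix.fromBlocks_one.symm
  subst hZ hδF hδP hWeff hA hP hR hK hδK hMinvhat hEhat hU hV hGhat
  have hEUV : (1 : Matrix (F ⊕ C) (F ⊕ C) ℝ) -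
      fromBlocks 1 ((1 - ΔF * Aff) * W - ΔF * Afc) 0 1 * fromBlocks ΔF 0 0 Khat⁻¹ *
          fromBlocks 1 0 (-(Acf * ΔF)) 1 * fromBlocks Aff Afc Acf Acc =
      fromBlocks (1 - ((1 - ΔF * Aff) * W - ΔF * Afc) * Khat⁻¹ * Acf)
          (((1 - ΔF * Aff) * W - ΔF * Afc) * Khat⁻¹) (-(Khat⁻¹ * Acf)) Khat⁻¹ *
        fromBlocks (1 - ΔF * Aff) (-((1 - ΔF * Aff) * W)) 0
          (Khat - (fromCols (-(Acf * ΔF)) 1 : Matrix C (F ⊕ C) ℝ) * fromBlocks Aff Afc Acf Acc * (fromRows W 1 : Matrix (F ⊕ C) C ℝ)) := by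
    rw [hone]
    simp only [Matrix.fromCols_mul_fromBlocks, Matrix.fromBlocks_mul_fromRows,
      Matrix.fromCols_mul_fromRows, Matrix.fromBlocks_multiply]
    rw [sub_eq_add_neg, Matrix.fromBlocks_neg, Matrix.fromBlocks_add, Matrix.fromBlocks_inj]
    refine ⟨?_, ?_, ?_, ?_⟩ <;>
    · simp only [Matrix.mul_add, Matrix.add_mul, Matrix.mul_sub, Matrix.sub_mul,
        Matrix.neg_mul, Matrix.mul_neg, Matrix.mul_assoc, Matrix.mul_one, Matrix.one_mul,
        Matrix.zero_mul, Matrix.mul_zero, hK1, hK2, hK1c, hK2c, hK1', hK2']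
      abel
  have hVU : fromBlocks (1 - ΔF * Aff) (-((1 - ΔF * Aff) * W)) 0
        (Khat - (fromCols (-(Acf * ΔF)) 1 : Matrix C (F ⊕ C) ℝ) * fromBlocks Aff Afc Acf Acc * (fromRows W 1 : Matrix (F ⊕ C) C ℝ)) *
      fromBlocks (1 - ((1 - ΔF * Aff) * W - ΔF * Afc) * Khat⁻¹ * Acf)
        (((1 - ΔF * Aff) * W - ΔF * Afc) * Khat⁻¹) (-(Khat⁻¹ * Acf)) Khat⁻¹ =
      fromBlocks
        ((1 - ΔF * Aff) + (1 - ΔF * Aff) * ΔF * (Aff * W + Afc) * Khat⁻¹ * Acf)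
        (-((1 - ΔF * Aff) * ΔF * (Aff * W + Afc) * Khat⁻¹))
        (-((Khat - (fromCols (-(Acf * ΔF)) 1 : Matrix C (F ⊕ C) ℝ) * fromBlocks Aff Afc Acf Acc * (fromRows W 1 : Matrix (F ⊕ C) C ℝ)) *
            Khat⁻¹ * Acf))
        ((Khat - (fromCols (-(Acf * ΔF)) 1 : Matrix C (F ⊕ C) ℝ) * fromBlocks Aff Afc Acf Acc * (fromRows W 1 : Matrix (F ⊕ C) C ℝ)) *
          Khat⁻¹) := by
    simp only [Matrix.fromCols_mul_fromBlocks, Matrix.fromBlocks_mul_fromRows,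
      Matrix.fromCols_mul_fromRows, Matrix.fromBlocks_multiply]
    rw [Matrix.fromBlocks_inj]
    refine ⟨?_, ?_, ?_, ?_⟩ <;>
    · simp only [Matrix.mul_add, Matrix.add_mul, Matrix.mul_sub, Matrix.sub_mul,
        Matrix.neg_mul, Matrix.mul_neg, Matrix.mul_assoc, Matrix.mul_one, Matrix.one_mul,
        Matrix.zero_mul, Matrix.mul_zero, hK1, hK2, hK1c, hK2c, hK1', hK2']
      abel
  intro k hk
  induction k with
  | zero => omega
  | succ n ih =>
    rcases Nat.eq_or_lt_of_le hk with h1 | h1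
    · rw [← h1]
      simpa using hEUV
    · have hn : 1 ≤ n := by omega
      have hsub : n + 1 - 1 = (n - 1) + 1 := by omega
      rw [pow_succ, ih hn, hsub, pow_succ, hEUV, ← hVU]
      simp only [Matrix.mul_assoc]
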